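/- Let K be a complete nonarchimedean field of characteristic zero equipped with a bounded derivation ∂ of finite operator norm, and let V be a nonzero finite-dimensional ∂-differential module over K. For exact sequences: if 0 → V₁ → V → V₂ → 0 is exact with V₁, V₂ nonzero, then |∂|_{sp,V} = max{ |∂|_{sp,V₁}, |∂|_{sp,V₂} }, where |∂|_{sp,W} = lim_{n→∞} |∂ⁿ|_W^{1/n} is the spectral norm of ∂ on W computed with respect to any K-compatible norm on W. -/

import Mathlib

open Filter

/-- A `K`-compatible (nonarchimedean) norm on a `K`-vector space `V`. -/
structure IsCompatibleNorm (K : Type*) [NormedField K]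
    (V : Type*) [AddCommGroup V] [Module K V] (N : V → ℝ) : Prop where
  nonneg : ∀ v, 0 ≤ N v
  eq_zero_iff : ∀ v, N v = 0 ↔ v = 0
  add_le : ∀ v w, N (v + w) ≤ max (N v) (N w)
  smul : ∀ (a : K) (v : V), N (a • v) = ‖a‖ * N v

/-- The operator norm of a map `f : V → V` with respect to a norm `N`. -/
noncomputable def opNormN {V : Type*} (N : V → ℝ) (f : V → V) : ℝ :=
  ⨆ v : {v : V // N v ≠ 0}, N (f v.1) / N v.1

/-- The spectral norm `|D|_{sp,V} = lim_n |Dⁿ|^{1/n}` (as a `limsup`). -/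
noncomputable def spectralNormN {V : Type*} (N : V → ℝ) (D : V → V) : ℝ :=
  limsup (fun n : ℕ => (opNormN N (D^[n])) ^ ((n : ℝ)⁻¹)) atTop

namespace IsCompatibleNorm

variable {K : Type*} [NormedField K] {V : Type*} [AddCommGroup V] [Module K V] {N : V → ℝ}

theorem zero' (hN : IsCompatibleNorm K V N) : N 0 = 0 := (hN.eq_zero_iff 0).mpr rfl

theorem neg' (hN : IsCompatibleNorm K V N) (v : V) : N (-v) = N v := by
  have := hN.smul (-1 : K) v
  simpa [norm_neg] using this

theorem pos (hN : IsCompatibleNorm K V N) {v : V} (hv : v ≠ 0) : 0 < N v :=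
  (hN.nonneg v).lt_of_ne (fun h => hv ((hN.eq_zero_iff v).mp h.symm))

theorem add_eq_left (hN : IsCompatibleNorm K V N) {v w : V} (h : N w < N v) :
    N (v + w) = N v := by
  refine le_antisymm ((hN.add_le v w).trans (max_le le_rfl h.le)) ?_
  have h2 : N v ≤ max (N (v + w)) (N w) := by
    have := hN.add_le (v + w) (-w)
    simpa [hN.neg'] using this
  rcases le_max_iff.mp h2 with h3 | h3
  · exact h3
  · exact absurd h3 (not_le.mpr h)

theorem sum_le (hN : IsCompatibleNorm K V N) {ι : Type*} (s : Finset ι) (x : ι → V) {B : ℝ}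
    (hB : 0 ≤ B) (h : ∀ i ∈ s, N (x i) ≤ B) : N (∑ i ∈ s, x i) ≤ B := by
  classical
  induction s using Finset.induction_on with
  | empty => simpa [hN.zero'] using hB
  | @insert _ _ hj ih =>
    rw [Finset.sum_insert hj]
    exact (hN.add_le _ _).trans (max_le (h _ (Finset.mem_insert_self _ _))
      (ih fun i hi => h i (Finset.mem_insert_of_mem hi)))

theorem sum_lt (hN : IsCompatibleNorm K V N) {ι : Type*} (s : Finset ι) (x : ι → V) {c : ℝ}
    (hc : 0 < c) (h : ∀ i ∈ s, N (x i) < c) : N (∑ i ∈ s, x i) < c := by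
  classical
  induction s using Finset.induction_on with
  | empty => simpa [hN.zero'] using hc
  | @insert _ _ hj ih =>
    rw [Finset.sum_insert hj]
    exact lt_of_le_of_lt (hN.add_le _ _) (max_lt (h _ (Finset.mem_insert_self _ _))
      (ih fun i hi => h i (Finset.mem_insert_of_mem hi)))

theorem sum_eq_max (hN : IsCompatibleNorm K V N) {ι : Type*} (t : Finset ι) (x : ι → V) {i0 : ι}
    (hi0 : i0 ∈ t) (hpos : 0 < N (x i0)) (hlt : ∀ i ∈ t, i ≠ i0 → N (x i) < N (x i0)) :
    N (∑ i ∈ t, x i) = N (x i0) := by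
  classical
  have h1 : ∑ i ∈ t, x i = x i0 + ∑ i ∈ t.erase i0, x i := (Finset.add_sum_erase t x hi0).symm
  rw [h1, hN.add_eq_left]
  exact hN.sum_lt _ _ hpos fun i hi =>
    hlt i (Finset.mem_of_mem_erase hi) (Finset.ne_of_mem_erase hi)

theorem sum_le_sum (hN : IsCompatibleNorm K V N) {ι : Type*} (s : Finset ι) (x : ι → V) :
    N (∑ i ∈ s, x i) ≤ ∑ i ∈ s, N (x i) := by
  classical
  induction s using Finset.induction_on with
  | empty => simp [hN.zero']
  | @insert _ _ hj ih =>
    rw [Finset.sum_insert hj, Finset.sum_insert hj]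
    exact (hN.add_le _ _).trans ((max_le_add_of_nonneg (hN.nonneg _)
      (hN.nonneg _)).trans (add_le_add le_rfl ih))

end IsCompatibleNorm

theorem isCompatibleNorm_norm {K : Type*} [NormedField K] [IsUltrametricDist K] :
    IsCompatibleNorm K K (fun x => ‖x‖) where
  nonneg := norm_nonneg
  eq_zero_iff := fun v => norm_eq_zero
  add_le := fun v w => IsUltrametricDist.norm_add_le_max v w
  smul := fun a v => by simp [smul_eq_mul]

section Trivial
variable {K : Type*} [NormedField K] {V : Type*} [AddCommGroup V] [Module K V] {N : V → ℝ}

theorem norm_eq_one_of_trivial (htriv : ∀ x : K, ‖x‖ ≤ 1) {x : K} (hx : x ≠ 0) : ‖x‖ = 1 := by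
  refine le_antisymm (htriv x) ?_
  have h1 : ‖x‖ * ‖x⁻¹‖ = 1 := by rw [← norm_mul, mul_inv_cancel₀ hx, norm_one]
  have h2 : ‖x⁻¹‖ ≤ 1 := htriv _
  nlinarith [norm_nonneg x, norm_nonneg x⁻¹]

theorem finite_values_of_trivial (htriv : ∀ x : K, ‖x‖ ≤ 1) (hN : IsCompatibleNorm K V N)
    [FiniteDimensional K V] : (N '' {v : V | v ≠ 0}).Finite := by
  by_contra hinf
  have hinf' : (N '' {v : V | v ≠ 0}).Infinite := hinf
  let e := hinf'.natEmbedding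
  have hmem : ∀ n : ℕ, ∃ v : V, v ≠ 0 ∧ N v = (e n : ℝ) := by
    intro n
    obtain ⟨v, hv, hvN⟩ := (e n).2
    exact ⟨v, hv, hvN⟩
  choose v hv0 hvN using hmem
  have hNinj : Function.Injective fun n => N (v n) := by
    intro m n h
    simp only [hvN] at h
    exact e.injective (Subtype.val_injective h)
  have hli : LinearIndependent K v := by
    rw [linearIndependent_iff']
    intro s g hsum i hi
    by_contra hgi
    classical
    set t := s.filter fun j => g j ≠ 0 with ht
    have hts : ∑ j ∈ t, g j • v j = 0 := by
      rw [← hsum]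
      apply Finset.sum_filter_of_ne
      intro j hj hne hg
      exact hne (by rw [hg, zero_smul])
    obtain ⟨j0, hj0t, hj0max⟩ := t.exists_max_image (fun j => N (v j))
      ⟨i, Finset.mem_filter.mpr ⟨hi, hgi⟩⟩
    have hgj0 : g j0 ≠ 0 := (Finset.mem_filter.mp hj0t).2
    have hterm : ∀ j ∈ t, N (g j • v j) = N (v j) := by
      intro j hj
      rw [hN.smul, norm_eq_one_of_trivial htriv (Finset.mem_filter.mp hj).2, one_mul]
    have hpos : 0 < N (g j0 • v j0) := by
      rw [hterm j0 hj0t]; exact hN.pos (hv0 j0)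
    have heq := hN.sum_eq_max t (fun j => g j • v j) hj0t hpos ?_
    · rw [hts, hN.zero'] at heq
      exact hpos.ne (by rw [heq])
    · intro j hj hjne
      rw [hterm j hj, hterm j0 hj0t]
      exact lt_of_le_of_ne (hj0max j hj) (fun h => hjne (hNinj h))
  exact Module.Finite.not_linearIndependent_of_infinite v hli

theorem exists_bounds_trivial (htriv : ∀ x : K, ‖x‖ ≤ 1) (hN : IsCompatibleNorm K V N)
    [FiniteDimensional K V] :
    ∃ c C : ℝ, 0 < c ∧ ∀ v : V, v ≠ 0 → c ≤ N v ∧ N v ≤ C := by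
  have hfin := finite_values_of_trivial htriv hN
  rcases (N '' {v : V | v ≠ 0}).eq_empty_or_nonempty with hS | hS
  · refine ⟨1, 1, one_pos, fun v hv => absurd ?_ (Set.eq_empty_iff_forall_notMem.mp hS (N v))⟩
    exact ⟨v, hv, rfl⟩
  · have hne : hfin.toFinset.Nonempty := by
      rwa [Set.Finite.toFinset_nonempty]
    refine ⟨hfin.toFinset.min' hne, hfin.toFinset.max' hne, ?_, fun v hv => ?_⟩
    · have hmem := hfin.toFinset.min'_mem hne
      rw [Set.Finite.mem_toFinset] at hmem
      obtain ⟨w, hw, hwN⟩ := hmem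
      rw [← hwN]
      exact hN.pos hw
    · have hmem : N v ∈ hfin.toFinset := by
        rw [Set.Finite.mem_toFinset]; exact ⟨v, hv, rfl⟩
      exact ⟨hfin.toFinset.min'_le _ hmem, hfin.toFinset.le_max' _ hmem⟩
end Trivial

section BoundLinear
variable {K : Type*} [NormedField K] [CompleteSpace K]

theorem IsCompatibleNorm.bound_linear {V W : Type*} [AddCommGroup V] [Module K V]
    [FiniteDimensional K V] [AddCommGroup W] [Module K W] [FiniteDimensional K W]
    {N : V → ℝ} {M : W → ℝ} (hN : IsCompatibleNorm K V N) (hM : IsCompatibleNorm K W M)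
    (L : V →ₗ[K] W) : ∃ C : ℝ, 0 < C ∧ ∀ v, M (L v) ≤ C * N v := by
  by_cases htriv : ∀ x : K, ‖x‖ ≤ 1
  · obtain ⟨c, C, hc, hbound⟩ := exists_bounds_trivial htriv hN
    obtain ⟨c', C', hc', hbound'⟩ := exists_bounds_trivial htriv hM
    refine ⟨max (C' / c) 1, lt_of_lt_of_le one_pos (le_max_right _ _), fun v => ?_⟩
    rcases eq_or_ne v 0 with rfl | hv
    · simp [map_zero, hM.zero', hN.zero']
    rcases eq_or_ne (L v) 0 with hLv | hLv
    · rw [hLv, hM.zero']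
      exact mul_nonneg (le_max_of_le_right zero_le_one) (hN.nonneg v)
    · have hC'pos : 0 < C' := lt_of_lt_of_le (hM.pos hLv) (hbound' _ hLv).2
      calc M (L v) ≤ C' := (hbound' _ hLv).2
        _ = (C' / c) * c := by field_simp
        _ ≤ max (C' / c) 1 * N v := by
            apply mul_le_mul (le_max_left _ _) (hbound v hv).1 hc.le
            positivity
  · push_neg at htriv
    obtain ⟨x, hx⟩ := htriv
    letI : NontriviallyNormedField K := { ‹NormedField K› with non_trivial := ⟨x, hx⟩ }
    letI : NormedAddCommGroup V := AddGroupNorm.toNormedAddCommGroup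
      { toFun := N
        map_zero' := hN.zero'
        add_le' := fun v w => (hN.add_le v w).trans
          (max_le_add_of_nonneg (hN.nonneg v) (hN.nonneg w))
        neg' := hN.neg'
        eq_zero_of_map_eq_zero' := fun v h => (hN.eq_zero_iff v).mp h }
    letI : NormedAddCommGroup W := AddGroupNorm.toNormedAddCommGroup
      { toFun := M
        map_zero' := hM.zero'
        add_le' := fun v w => (hM.add_le v w).trans
          (max_le_add_of_nonneg (hM.nonneg v) (hM.nonneg w))
        neg' := hM.neg'
        eq_zero_of_map_eq_zero' := fun v h => (hM.eq_zero_iff v).mp h }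
    letI : NormedSpace K V := ⟨fun a v => le_of_eq (hN.smul a v)⟩
    letI : NormedSpace K W := ⟨fun a v => le_of_eq (hM.smul a v)⟩
    have hcont : Continuous L := L.continuous_of_finiteDimensional
    obtain ⟨C, hC, hb⟩ := SemilinearMapClass.bound_of_continuous L hcont
    exact ⟨C, hC, hb⟩
end BoundLinear

section DerivProps
variable {K : Type*} [NormedField K] {V : Type*} [AddCommGroup V] [Module K V]

theorem deriv_props (d : K → K) (hmul : ∀ a b : K, d (a * b) = d a * b + a * d b)
    (Dv : V → V) (hDv : ∀ (a : K) (v w : V), Dv (a • v + w) = d a • v + a • Dv v + Dv w) :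
    (∀ v w, Dv (v + w) = Dv v + Dv w) ∧ Dv 0 = 0 ∧
      (∀ (a : K) (v : V), Dv (a • v) = d a • v + a • Dv v) := by
  have h1 : d 1 = 0 := by
    have := hmul 1 1
    rw [mul_one, mul_one, one_mul] at this
    exact (left_eq_add.mp this)
  have hadd : ∀ v w, Dv (v + w) = Dv v + Dv w := by
    intro v w
    have := hDv 1 v w
    simpa [h1, one_smul] using this
  have h0 : Dv 0 = 0 := by
    have := hadd 0 0
    rw [add_zero] at this
    exact (left_eq_add.mp this)
  refine ⟨hadd, h0, fun a v => ?_⟩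
  have := hDv a v 0
  simpa [h0] using this

theorem iterate_add_of_add {F : V → V} (h : ∀ v w, F (v + w) = F v + F w) (n : ℕ) (v w : V) :
    F^[n] (v + w) = F^[n] v + F^[n] w := by
  induction n generalizing v w with
  | zero => simp
  | succ n ih => rw [Function.iterate_succ_apply, Function.iterate_succ_apply,
      Function.iterate_succ_apply, h, ih]
end DerivProps

section BoundDeriv
variable {K : Type*} [NormedField K] [CompleteSpace K] [IsUltrametricDist K]
variable {V : Type*} [AddCommGroup V] [Module K V] [FiniteDimensional K V] {N : V → ℝ}

theorem IsCompatibleNorm.bound_derivation (hN : IsCompatibleNorm K V N) (d : K → K)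
    (hadd : ∀ a b : K, d (a + b) = d a + d b)
    (hmul : ∀ a b : K, d (a * b) = d a * b + a * d b)
    (hbdd : ∃ c : ℝ, ∀ x : K, ‖d x‖ ≤ c * ‖x‖) (Dv : V → V)
    (hDv : ∀ (a : K) (v w : V), Dv (a • v + w) = d a • v + a • Dv v + Dv w) :
    ∃ C : ℝ, 1 ≤ C ∧ ∀ v, N (Dv v) ≤ C * N v := by
  classical
  obtain ⟨c, hc⟩ := hbdd
  have hc0 : 0 ≤ c := by
    have := hc 1
    rw [norm_one, mul_one] at this
    exact le_trans (norm_nonneg _) this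
  obtain ⟨hDadd, hD0, hDsmul⟩ := deriv_props d hmul Dv hDv
  set b := Module.finBasis K V with hb
  set T : V → V := fun v => ∑ i, d (b.repr v i) • b i with hT
  -- T is a twisted-linear part
  have hTadd : ∀ v w, T (v + w) = T v + T w := by
    intro v w
    simp only [hT, map_add, Finsupp.add_apply, hadd, add_smul, Finset.sum_add_distrib]
  have hTsmul : ∀ (a : K) (v : V), T (a • v) = d a • v + a • T v := by
    intro a v
    have hterm : ∀ i, d (b.repr (a • v) i) • b i
        = d a • (b.repr v i • b i) + a • (d (b.repr v i) • b i) := by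
      intro i
      rw [map_smul, Finsupp.smul_apply, smul_eq_mul, hmul, add_smul, mul_smul, mul_smul]
    rw [hT]
    simp only [hterm, Finset.sum_add_distrib, ← Finset.smul_sum]
    congr 1
    rw [Module.Basis.sum_repr]
  set L : V →ₗ[K] V :=
    { toFun := fun v => Dv v - T v
      map_add' := by
        intro v w
        show Dv (v + w) - T (v + w) = (Dv v - T v) + (Dv w - T w)
        rw [hDadd, hTadd]
        abel
      map_smul' := by
        intro a v
        show Dv (a • v) - T (a • v) = a • (Dv v - T v)
        rw [hDsmul, hTsmul, smul_sub]
        abel } with hL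
  obtain ⟨CL, hCL, hCLb⟩ := hN.bound_linear hN L
  choose Cc hCc0 hCcb using fun i => hN.bound_linear (isCompatibleNorm_norm (K := K)) (b.coord i)
  set CT : ℝ := ∑ i, c * Cc i * N (b i) with hCT
  have hCT0 : 0 ≤ CT := by
    apply Finset.sum_nonneg
    intro i _
    have := hN.nonneg (b i)
    have := (hCc0 i).le
    positivity
  have hTb : ∀ v, N (T v) ≤ CT * N v := by
    intro v
    calc N (T v) ≤ ∑ i, N (d (b.repr v i) • b i) := hN.sum_le_sum _ _
      _ ≤ ∑ i, c * Cc i * N (b i) * N v := by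
          apply Finset.sum_le_sum
          intro i _
          rw [hN.smul]
          have h1 : ‖d (b.repr v i)‖ ≤ c * ‖b.repr v i‖ := hc _
          have h2 : ‖b.repr v i‖ ≤ Cc i * N v := by
            have := hCcb i v
            simpa using this
          have h3 : (0:ℝ) ≤ N (b i) := hN.nonneg _
          have h4 : (0:ℝ) ≤ ‖b.repr v i‖ := norm_nonneg _
          have h5 : (0:ℝ) ≤ Cc i := (hCc0 i).le
          have h6 : (0:ℝ) ≤ N v := hN.nonneg _
          nlinarith [mul_le_mul_of_nonneg_right h1 h3,
            mul_le_mul_of_nonneg_right (mul_le_mul_of_nonneg_left h2 hc0) h3]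
      _ = CT * N v := by rw [hCT, Finset.sum_mul]
  refine ⟨max (CL + CT) 1, le_max_right _ _, fun v => ?_⟩
  have hsplit : Dv v = L v + T v := by
    simp [hL]
  rw [hsplit]
  calc N (L v + T v) ≤ max (N (L v)) (N (T v)) := hN.add_le _ _
    _ ≤ (CL + CT) * N v := by
        apply max_le
        · have := hTb v
          have h6 : (0:ℝ) ≤ N v := hN.nonneg _
          have := hCLb v
          nlinarith [hCT0]
        · have := hCLb v
          have h6 : (0:ℝ) ≤ N v := hN.nonneg _
          nlinarith [hCL.le, hTb v]
    _ ≤ max (CL + CT) 1 * N v := by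
        apply mul_le_mul_of_nonneg_right (le_max_left _ _) (hN.nonneg v)
end BoundDeriv

section OpNorm
variable {K : Type*} [NormedField K] {V : Type*} [AddCommGroup V] [Module K V] {N : V → ℝ}

theorem opNormN_nonneg (hN : IsCompatibleNorm K V N) (F : V → V) : 0 ≤ opNormN N F :=
  Real.iSup_nonneg fun v => div_nonneg (hN.nonneg _) (hN.nonneg _)

theorem opNormN_le (hN : IsCompatibleNorm K V N) {F : V → V} {C : ℝ} (hC : 0 ≤ C)
    (hex : ∃ v : V, v ≠ 0) (h : ∀ v, N (F v) ≤ C * N v) : opNormN N F ≤ C := by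
  obtain ⟨v0, hv0⟩ := hex
  have : Nonempty {v : V // N v ≠ 0} := ⟨⟨v0, (hN.pos hv0).ne'⟩⟩
  refine ciSup_le fun v => ?_
  have hpos : 0 < N v.1 := (hN.nonneg _).lt_of_ne (Ne.symm v.2)
  rw [div_le_iff₀ hpos]
  exact h v.1

theorem le_opNormN (hN : IsCompatibleNorm K V N) {F : V → V} (hF0 : F 0 = 0) {C : ℝ}
    (h : ∀ v, N (F v) ≤ C * N v) (v : V) : N (F v) ≤ opNormN N F * N v := by
  rcases eq_or_ne v 0 with rfl | hv
  · simp [hF0, hN.zero']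
  have hpos : 0 < N v := hN.pos hv
  have hbdd : BddAbove (Set.range fun w : {w : V // N w ≠ 0} => N (F w.1) / N w.1) := by
    refine ⟨max C 0, fun x hx => ?_⟩
    obtain ⟨w, rfl⟩ := hx
    have hw : 0 < N w.1 := (hN.nonneg _).lt_of_ne (Ne.symm w.2)
    rw [div_le_iff₀ hw]
    exact le_trans (h w.1) (mul_le_mul_of_nonneg_right (le_max_left _ _) hw.le)
  have hle := le_ciSup hbdd (⟨v, hpos.ne'⟩ : {w : V // N w ≠ 0})
  calc N (F v) = (N (F v) / N v) * N v := by field_simp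
    _ ≤ opNormN N F * N v := mul_le_mul_of_nonneg_right hle hpos.le
end OpNorm

section RealSeq
open Real

theorem rpow_inv_le {q C : ℝ} (hq0 : 0 ≤ q) (hC : 1 ≤ C) {n : ℕ} (h : q ≤ C ^ n) :
    q ^ ((n : ℝ)⁻¹) ≤ C := by
  rcases Nat.eq_zero_or_pos n with rfl | hn
  · simpa using hC
  · have hne : ((n : ℝ)) ≠ 0 := Nat.cast_ne_zero.mpr hn.ne'
    have h1 : q ^ ((n : ℝ)⁻¹) ≤ (C ^ n) ^ ((n : ℝ)⁻¹) :=
      Real.rpow_le_rpow hq0 h (by positivity)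
    rwa [← Real.rpow_natCast C n, ← Real.rpow_mul (by linarith), mul_inv_cancel₀ hne,
      Real.rpow_one] at h1

theorem tendsto_rpow_inv_one {A : ℝ} (hA : 0 < A) :
    Tendsto (fun n : ℕ => A ^ ((n : ℝ)⁻¹)) atTop (nhds 1) := by
  have h0 : Tendsto (fun n : ℕ => (n : ℝ)⁻¹) atTop (nhds 0) :=
    tendsto_inv_atTop_nhds_zero_nat
  have h1 : Tendsto (fun n : ℕ => Real.log A * (n : ℝ)⁻¹) atTop (nhds 0) := by
    simpa using h0.const_mul (Real.log A)
  have h2 : Tendsto (fun n : ℕ => Real.exp (Real.log A * (n : ℝ)⁻¹)) atTop (nhds 1) := by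
    simpa [Function.comp_def] using (Real.continuous_exp.tendsto 0).comp h1
  refine h2.congr fun n => ?_
  rw [Real.rpow_def_of_pos hA]

theorem limsup_le_of_pow_bound {q : ℕ → ℝ} (hq0 : ∀ n, 0 ≤ q n) {A c : ℝ} (hA : 0 < A)
    (hc : 0 ≤ c) (h : ∀ n, q n ≤ A * c ^ n) :
    limsup (fun n : ℕ => q n ^ ((n : ℝ)⁻¹)) atTop ≤ c := by
  have hcob : IsCoboundedUnder (· ≤ ·) atTop fun n : ℕ => q n ^ ((n : ℝ)⁻¹) :=
    isCoboundedUnder_le_of_eventually_le atTop (x := 0)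
      (Eventually.of_forall fun n => Real.rpow_nonneg (hq0 n) _)
  refine le_of_forall_pos_le_add fun δ hδ => ?_
  refine limsup_le_of_le hcob ?_
  have h1 : Tendsto (fun n : ℕ => A ^ ((n : ℝ)⁻¹) * c) atTop (nhds (1 * c)) :=
    (tendsto_rpow_inv_one hA).mul_const c
  rw [one_mul] at h1
  have h2 : ∀ᶠ n : ℕ in atTop, A ^ ((n : ℝ)⁻¹) * c < c + δ :=
    h1.eventually_lt_const (by linarith)
  filter_upwards [h2, eventually_ge_atTop 1] with n hn hn1
  have hne : ((n : ℝ)) ≠ 0 := Nat.cast_ne_zero.mpr (by omega)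
  have hq : q n ^ ((n : ℝ)⁻¹) ≤ A ^ ((n : ℝ)⁻¹) * c := by
    have h3 : q n ^ ((n : ℝ)⁻¹) ≤ (A * c ^ n) ^ ((n : ℝ)⁻¹) :=
      Real.rpow_le_rpow (hq0 n) (h n) (by positivity)
    rwa [Real.mul_rpow hA.le (by positivity), ← Real.rpow_natCast c n,
      ← Real.rpow_mul hc, mul_inv_cancel₀ hne, Real.rpow_one] at h3
  linarith

theorem exists_bound_of_limsup {q : ℕ → ℝ} (hq0 : ∀ n, 0 ≤ q n) {C : ℝ} (hC : 1 ≤ C)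
    (h : ∀ n, q n ≤ C ^ n) {ε : ℝ} (hε : 0 < ε) :
    0 ≤ limsup (fun n : ℕ => q n ^ ((n : ℝ)⁻¹)) atTop ∧
      ∃ A : ℝ, 0 < A ∧
        ∀ n, q n ≤ A * (limsup (fun n : ℕ => q n ^ ((n : ℝ)⁻¹)) atTop + ε) ^ n := by
  set r := limsup (fun n : ℕ => q n ^ ((n : ℝ)⁻¹)) atTop with hr
  have hb : IsBoundedUnder (· ≤ ·) atTop fun n : ℕ => q n ^ ((n : ℝ)⁻¹) :=
    isBoundedUnder_of ⟨C, fun n => rpow_inv_le (hq0 n) hC (h n)⟩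
  have hr0 : 0 ≤ r :=
    le_limsup_of_frequently_le
      (Frequently.of_forall fun n => Real.rpow_nonneg (hq0 n) _) hb
  have hrε : 0 < r + ε := by linarith
  have hev : ∀ᶠ n : ℕ in atTop, q n ^ ((n : ℝ)⁻¹) < r + ε :=
    eventually_lt_of_limsup_lt (by rw [← hr]; linarith) hb
  obtain ⟨n₀, hn₀⟩ := eventually_atTop.mp hev
  set m := max n₀ 1 with hm
  have hlarge : ∀ n, m ≤ n → q n ≤ (r + ε) ^ n := by
    intro n hn
    have h1 : 1 ≤ n := le_trans (le_max_right _ _) hn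
    have h2 := (hn₀ n (le_trans (le_max_left _ _) hn)).le
    calc q n = (q n ^ ((n : ℝ)⁻¹)) ^ n :=
          (Real.rpow_inv_natCast_pow (hq0 n) (by omega)).symm
      _ ≤ (r + ε) ^ n := pow_le_pow_left₀ (Real.rpow_nonneg (hq0 n) _) h2 n
  set μ := min 1 ((r + ε) ^ m) with hμdef
  have hμ : 0 < μ := lt_min one_pos (pow_pos hrε m)
  have hmin : ∀ n, n ≤ m → μ ≤ (r + ε) ^ n := by
    intro n hn
    rcases le_total 1 (r + ε) with h1 | h1
    · refine le_trans (min_le_left _ _) ?_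
      calc (1:ℝ) = 1 ^ n := (one_pow n).symm
        _ ≤ (r + ε) ^ n := pow_le_pow_left₀ zero_le_one h1 n
    · exact le_trans (min_le_right _ _) (pow_le_pow_of_le_one hrε.le h1 hn)
  refine ⟨hr0, max 1 (C ^ m / μ), lt_of_lt_of_le one_pos (le_max_left _ _), fun n => ?_⟩
  rcases le_or_gt m n with hn | hn
  · exact le_trans (hlarge n hn)
      (le_mul_of_one_le_left (pow_nonneg hrε.le n) (le_max_left _ _))
  · calc q n ≤ C ^ n := h n
      _ ≤ C ^ m := pow_le_pow_right₀ (by linarith) hn.le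
      _ = (C ^ m / μ) * μ := by field_simp
      _ ≤ (C ^ m / μ) * (r + ε) ^ n := by
          apply mul_le_mul_of_nonneg_left (hmin n hn.le)
          positivity
      _ ≤ max 1 (C ^ m / μ) * (r + ε) ^ n :=
          mul_le_mul_of_nonneg_right (le_max_right _ _) (pow_nonneg hrε.le n)
end RealSeq

/-- Lemma (`L:basic-IR-prop`(a), spectral norm form): for an exact sequence
`0 → V₁ → V → V₂ → 0` of nonzero finite-dimensional differential modules over a
complete nonarchimedean differential field `(K, ∂)` of characteristic zero with
`|∂|_K < ∞`, one has `|∂|_{sp,V} = max{|∂|_{sp,V₁}, |∂|_{sp,V₂}}`, the spectral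
norms being computed with respect to (arbitrary) `K`-compatible norms. -/
theorem spectralNorm_exact_sequence
    (K : Type*) [NormedField K] [CompleteSpace K] [IsUltrametricDist K] [CharZero K]
    (d : K → K) (hadd : ∀ a b : K, d (a + b) = d a + d b)
    (hmul : ∀ a b : K, d (a * b) = d a * b + a * d b)
    (hbdd : ∃ c : ℝ, ∀ x : K, ‖d x‖ ≤ c * ‖x‖)
    (V V₁ V₂ : Type*)
    [AddCommGroup V] [Module K V] [FiniteDimensional K V]
    [AddCommGroup V₁] [Module K V₁] [FiniteDimensional K V₁]
    [AddCommGroup V₂] [Module K V₂] [FiniteDimensional K V₂]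
    (hV₁ : Nontrivial V₁) (hV₂ : Nontrivial V₂)
    (D : V → V) (D₁ : V₁ → V₁) (D₂ : V₂ → V₂)
    (hD : ∀ (a : K) (v w : V), D (a • v + w) = d a • v + a • D v + D w)
    (hD₁ : ∀ (a : K) (v w : V₁), D₁ (a • v + w) = d a • v + a • D₁ v + D₁ w)
    (hD₂ : ∀ (a : K) (v w : V₂), D₂ (a • v + w) = d a • v + a • D₂ v + D₂ w)
    (f : V₁ →ₗ[K] V) (g : V →ₗ[K] V₂)
    (hf : Function.Injective f) (hg : Function.Surjective g)
    (hexact : LinearMap.range f = LinearMap.ker g)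
    (hfD : ∀ v, f (D₁ v) = D (f v)) (hgD : ∀ v, g (D v) = D₂ (g v))
    (N : V → ℝ) (N₁ : V₁ → ℝ) (N₂ : V₂ → ℝ)
    (hN : IsCompatibleNorm K V N) (hN₁ : IsCompatibleNorm K V₁ N₁)
    (hN₂ : IsCompatibleNorm K V₂ N₂) :
    spectralNormN N D = max (spectralNormN N₁ D₁) (spectralNormN N₂ D₂) := by
  classical
  haveI := hV₁
  haveI := hV₂
  obtain ⟨hDadd, hD0, hDsmul⟩ := deriv_props d hmul D hD
  obtain ⟨hD1add, hD10, hD1smul⟩ := deriv_props d hmul D₁ hD₁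
  obtain ⟨hD2add, hD20, hD2smul⟩ := deriv_props d hmul D₂ hD₂
  obtain ⟨x1, hx1⟩ := exists_ne (0 : V₁)
  obtain ⟨x2, hx2⟩ := exists_ne (0 : V₂)
  have hexV₁ : ∃ v : V₁, v ≠ 0 := ⟨x1, hx1⟩
  have hexV₂ : ∃ v : V₂, v ≠ 0 := ⟨x2, hx2⟩
  have hexV : ∃ v : V, v ≠ 0 := ⟨f x1, fun h => hx1 (hf (by simp [h]))⟩
  -- derivation bounds
  obtain ⟨CV, hCV1, hCVb⟩ := hN.bound_derivation d hadd hmul hbdd D hD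
  obtain ⟨C1, hC11, hC1b⟩ := hN₁.bound_derivation d hadd hmul hbdd D₁ hD₁
  obtain ⟨C2, hC21, hC2b⟩ := hN₂.bound_derivation d hadd hmul hbdd D₂ hD₂
  have hCV0 : (0:ℝ) < CV := lt_of_lt_of_le one_pos hCV1
  have hC10 : (0:ℝ) < C1 := lt_of_lt_of_le one_pos hC11
  have hC20 : (0:ℝ) < C2 := lt_of_lt_of_le one_pos hC21
  -- iterate bounds
  have hDnb : ∀ (n : ℕ) (v : V), N (D^[n] v) ≤ CV ^ n * N v := by
    intro n
    induction n with
    | zero => intro v; simp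
    | succ n ih =>
      intro v
      rw [Function.iterate_succ_apply']
      calc N (D (D^[n] v)) ≤ CV * N (D^[n] v) := hCVb _
        _ ≤ CV * (CV ^ n * N v) := mul_le_mul_of_nonneg_left (ih v) hCV0.le
        _ = CV ^ (n + 1) * N v := by ring
  have hD1nb : ∀ (n : ℕ) (v : V₁), N₁ (D₁^[n] v) ≤ C1 ^ n * N₁ v := by
    intro n
    induction n with
    | zero => intro v; simp
    | succ n ih =>
      intro v
      rw [Function.iterate_succ_apply']
      calc N₁ (D₁ (D₁^[n] v)) ≤ C1 * N₁ (D₁^[n] v) := hC1b _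
        _ ≤ C1 * (C1 ^ n * N₁ v) := mul_le_mul_of_nonneg_left (ih v) hC10.le
        _ = C1 ^ (n + 1) * N₁ v := by ring
  have hD2nb : ∀ (n : ℕ) (v : V₂), N₂ (D₂^[n] v) ≤ C2 ^ n * N₂ v := by
    intro n
    induction n with
    | zero => intro v; simp
    | succ n ih =>
      intro v
      rw [Function.iterate_succ_apply']
      calc N₂ (D₂ (D₂^[n] v)) ≤ C2 * N₂ (D₂^[n] v) := hC2b _
        _ ≤ C2 * (C2 ^ n * N₂ v) := mul_le_mul_of_nonneg_left (ih v) hC20.le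
        _ = C2 ^ (n + 1) * N₂ v := by ring
  have hDn0 : ∀ n : ℕ, D^[n] (0 : V) = 0 := fun n => Function.iterate_fixed hD0 n
  have hD1n0 : ∀ n : ℕ, D₁^[n] (0 : V₁) = 0 := fun n => Function.iterate_fixed hD10 n
  have hD2n0 : ∀ n : ℕ, D₂^[n] (0 : V₂) = 0 := fun n => Function.iterate_fixed hD20 n
  -- operator norm facts
  have hs0 : ∀ n : ℕ, 0 ≤ opNormN N (D^[n]) := fun n => opNormN_nonneg hN _
  have hu0 : ∀ n : ℕ, 0 ≤ opNormN N₁ (D₁^[n]) := fun n => opNormN_nonneg hN₁ _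
  have hw0 : ∀ n : ℕ, 0 ≤ opNormN N₂ (D₂^[n]) := fun n => opNormN_nonneg hN₂ _
  have hsC : ∀ n : ℕ, opNormN N (D^[n]) ≤ CV ^ n := fun n =>
    opNormN_le hN (pow_nonneg hCV0.le n) hexV (hDnb n)
  have huC : ∀ n : ℕ, opNormN N₁ (D₁^[n]) ≤ C1 ^ n := fun n =>
    opNormN_le hN₁ (pow_nonneg hC10.le n) hexV₁ (hD1nb n)
  have hwC : ∀ n : ℕ, opNormN N₂ (D₂^[n]) ≤ C2 ^ n := fun n =>
    opNormN_le hN₂ (pow_nonneg hC20.le n) hexV₂ (hD2nb n)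
  have hsle : ∀ (n : ℕ) (v : V), N (D^[n] v) ≤ opNormN N (D^[n]) * N v := fun n =>
    le_opNormN hN (hDn0 n) (hDnb n)
  have hule : ∀ (n : ℕ) (v : V₁), N₁ (D₁^[n] v) ≤ opNormN N₁ (D₁^[n]) * N₁ v := fun n =>
    le_opNormN hN₁ (hD1n0 n) (hD1nb n)
  have hwle : ∀ (n : ℕ) (v : V₂), N₂ (D₂^[n] v) ≤ opNormN N₂ (D₂^[n]) * N₂ v := fun n =>
    le_opNormN hN₂ (hD2n0 n) (hD2nb n)
  -- splitting maps
  obtain ⟨π, hπ⟩ := f.exists_leftInverse_of_injective (LinearMap.ker_eq_bot.mpr hf)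
  obtain ⟨σ, hσ⟩ := g.exists_rightInverse_of_surjective (LinearMap.range_eq_top.mpr hg)
  have hπf : ∀ x : V₁, π (f x) = x := by
    intro x
    have := LinearMap.ext_iff.mp hπ x
    simpa using this
  have hgσ : ∀ y : V₂, g (σ y) = y := by
    intro y
    have := LinearMap.ext_iff.mp hσ y
    simpa using this
  have hfπ : ∀ v : V, g v = 0 → f (π v) = v := by
    intro v hv
    have hmem : v ∈ LinearMap.range f := by
      rw [hexact]
      exact LinearMap.mem_ker.mpr hv
    obtain ⟨x, hx⟩ := hmem
    rw [← hx, hπf]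
  set τ : V →ₗ[K] V₁ := π ∘ₗ (LinearMap.id - σ ∘ₗ g) with hτdef
  have hτ : ∀ v : V, f (τ v) = v - σ (g v) := by
    intro v
    have hg0 : g (v - σ (g v)) = 0 := by simp [map_sub, hgσ]
    have h2 := hfπ _ hg0
    simpa [hτdef, LinearMap.comp_apply, LinearMap.sub_apply] using h2
  set Et : V₂ →ₗ[K] V :=
    { toFun := fun y => D (σ y) - σ (D₂ y)
      map_add' := by
        intro y z
        show D (σ (y + z)) - σ (D₂ (y + z)) = (D (σ y) - σ (D₂ y)) + (D (σ z) - σ (D₂ z))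
        rw [map_add, hDadd, hD2add, map_add]
        abel
      map_smul' := by
        intro a y
        show D (σ (a • y)) - σ (D₂ (a • y)) = a • (D (σ y) - σ (D₂ y))
        rw [map_smul, hDsmul, hD2smul, map_add, map_smul, map_smul, smul_sub]
        abel } with hEtdef
  set E' : V₂ →ₗ[K] V₁ := π ∘ₗ Et with hE'def
  have hfE' : ∀ y : V₂, f (E' y) = D (σ y) - σ (D₂ y) := by
    intro y
    have hg0 : g (D (σ y) - σ (D₂ y)) = 0 := by
      rw [map_sub, hgD, hgσ, hgσ, sub_self]
    have h2 := hfπ _ hg0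
    simpa [hE'def, hEtdef, LinearMap.comp_apply] using h2
  have hsplitσ : ∀ y : V₂, D (σ y) = σ (D₂ y) + f (E' y) := by
    intro y
    rw [hfE']
    abel
  -- iterate commutation
  have hfDn : ∀ (n : ℕ) (x : V₁), f (D₁^[n] x) = D^[n] (f x) := by
    intro n
    induction n with
    | zero => intro x; simp
    | succ n ih =>
      intro x
      rw [Function.iterate_succ_apply, ih, hfD, ← Function.iterate_succ_apply]
  have hgDn : ∀ (n : ℕ) (v : V), g (D^[n] v) = D₂^[n] (g v) := by
    intro n
    induction n with
    | zero => intro v; simp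
    | succ n ih =>
      intro v
      rw [Function.iterate_succ_apply, ih, hgD, ← Function.iterate_succ_apply]
  -- key iteration identity
  have hkey : ∀ (n : ℕ) (y : V₂), D^[n] (σ y)
      = σ (D₂^[n] y) + ∑ k ∈ Finset.range n, f (D₁^[n - 1 - k] (E' (D₂^[k] y))) := by
    intro n
    induction n with
    | zero => intro y; simp
    | succ n ih =>
      intro y
      have hsum : ∑ k ∈ Finset.range (n + 1), f (D₁^[n + 1 - 1 - k] (E' (D₂^[k] y)))
          = ∑ k ∈ Finset.range n, f (D₁^[n - 1 - k] (E' (D₂^[k] (D₂ y)))) + f (D₁^[n] (E' y)) := by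
        have hshift : ∀ k ∈ Finset.range n,
            f (D₁^[n + 1 - 1 - (k + 1)] (E' (D₂^[k + 1] y)))
              = f (D₁^[n - 1 - k] (E' (D₂^[k] (D₂ y)))) := by
          intro k hk
          have he : n + 1 - 1 - (k + 1) = n - 1 - k := by omega
          rw [he, Function.iterate_succ_apply]
        rw [Finset.sum_range_succ', Finset.sum_congr rfl hshift]
        simp
      calc D^[n + 1] (σ y)
          = D^[n] (σ (D₂ y) + f (E' y)) := by
            rw [Function.iterate_succ_apply, hsplitσ]
        _ = D^[n] (σ (D₂ y)) + D^[n] (f (E' y)) := iterate_add_of_add hDadd n _ _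
        _ = (σ (D₂^[n] (D₂ y)) + ∑ k ∈ Finset.range n, f (D₁^[n - 1 - k] (E' (D₂^[k] (D₂ y)))))
              + f (D₁^[n] (E' y)) := by rw [ih (D₂ y), ← hfDn n (E' y)]
        _ = σ (D₂^[n + 1] y)
              + ∑ k ∈ Finset.range (n + 1), f (D₁^[n + 1 - 1 - k] (E' (D₂^[k] y))) := by
            rw [hsum, Function.iterate_succ_apply D₂ n y]
            abel
  -- linear map bounds
  obtain ⟨Cf, hCf, hCfb⟩ := hN₁.bound_linear hN f
  obtain ⟨Cπ, hCπ, hCπb⟩ := hN.bound_linear hN₁ π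
  obtain ⟨Cσ, hCσ, hCσb⟩ := hN₂.bound_linear hN σ
  obtain ⟨Cg, hCg, hCgb⟩ := hN.bound_linear hN₂ g
  obtain ⟨CE, hCE, hCEb⟩ := hN₂.bound_linear hN₁ E'
  obtain ⟨Cτ, hCτ, hCτb⟩ := hN.bound_linear hN₁ τ
  -- first easy direction : spectralNormN N₁ D₁ ≤ spectralNormN N D
  have hub1 : ∀ n : ℕ, opNormN N₁ (D₁^[n]) ≤ (Cπ * Cf) * opNormN N (D^[n]) := by
    intro n
    apply opNormN_le hN₁ (mul_nonneg (mul_nonneg hCπ.le hCf.le) (hs0 n)) hexV₁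
    intro x
    calc N₁ (D₁^[n] x) = N₁ (π (f (D₁^[n] x))) := by rw [hπf]
      _ ≤ Cπ * N (f (D₁^[n] x)) := hCπb _
      _ = Cπ * N (D^[n] (f x)) := by rw [hfDn]
      _ ≤ Cπ * (opNormN N (D^[n]) * N (f x)) :=
          mul_le_mul_of_nonneg_left (hsle n (f x)) hCπ.le
      _ ≤ Cπ * (opNormN N (D^[n]) * (Cf * N₁ x)) :=
          mul_le_mul_of_nonneg_left (mul_le_mul_of_nonneg_left (hCfb x) (hs0 n)) hCπ.le
      _ = Cπ * Cf * opNormN N (D^[n]) * N₁ x := by ring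
  have hub2 : ∀ n : ℕ, opNormN N₂ (D₂^[n]) ≤ (Cg * Cσ) * opNormN N (D^[n]) := by
    intro n
    apply opNormN_le hN₂ (mul_nonneg (mul_nonneg hCg.le hCσ.le) (hs0 n)) hexV₂
    intro y
    calc N₂ (D₂^[n] y) = N₂ (g (D^[n] (σ y))) := by rw [hgDn, hgσ]
      _ ≤ Cg * N (D^[n] (σ y)) := hCgb _
      _ ≤ Cg * (opNormN N (D^[n]) * N (σ y)) :=
          mul_le_mul_of_nonneg_left (hsle n (σ y)) hCg.le
      _ ≤ Cg * (opNormN N (D^[n]) * (Cσ * N₂ y)) :=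
          mul_le_mul_of_nonneg_left (mul_le_mul_of_nonneg_left (hCσb y) (hs0 n)) hCg.le
      _ = Cg * Cσ * opNormN N (D^[n]) * N₂ y := by ring
  have hle1 : spectralNormN N₁ D₁ ≤ spectralNormN N D := by
    refine le_of_forall_pos_le_add fun ε hε => ?_
    obtain ⟨hr0, A, hA, hAb⟩ := exists_bound_of_limsup hs0 hCV1 hsC hε
    have hr0' : 0 ≤ spectralNormN N D := hr0
    have hAb' : ∀ n : ℕ, opNormN N (D^[n]) ≤ A * (spectralNormN N D + ε) ^ n := hAb
    have hbnd : ∀ n : ℕ, opNormN N₁ (D₁^[n]) ≤ (Cπ * Cf * A) * (spectralNormN N D + ε) ^ n := by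
      intro n
      calc opNormN N₁ (D₁^[n]) ≤ (Cπ * Cf) * opNormN N (D^[n]) := hub1 n
        _ ≤ (Cπ * Cf) * (A * (spectralNormN N D + ε) ^ n) :=
            mul_le_mul_of_nonneg_left (hAb' n) (mul_nonneg hCπ.le hCf.le)
        _ = (Cπ * Cf * A) * (spectralNormN N D + ε) ^ n := by ring
    exact limsup_le_of_pow_bound hu0 (mul_pos (mul_pos hCπ hCf) hA) (by linarith) hbnd
  have hle2 : spectralNormN N₂ D₂ ≤ spectralNormN N D := by
    refine le_of_forall_pos_le_add fun ε hε => ?_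
    obtain ⟨hr0, A, hA, hAb⟩ := exists_bound_of_limsup hs0 hCV1 hsC hε
    have hr0' : 0 ≤ spectralNormN N D := hr0
    have hAb' : ∀ n : ℕ, opNormN N (D^[n]) ≤ A * (spectralNormN N D + ε) ^ n := hAb
    have hbnd : ∀ n : ℕ, opNormN N₂ (D₂^[n]) ≤ (Cg * Cσ * A) * (spectralNormN N D + ε) ^ n := by
      intro n
      calc opNormN N₂ (D₂^[n]) ≤ (Cg * Cσ) * opNormN N (D^[n]) := hub2 n
        _ ≤ (Cg * Cσ) * (A * (spectralNormN N D + ε) ^ n) :=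
            mul_le_mul_of_nonneg_left (hAb' n) (mul_nonneg hCg.le hCσ.le)
        _ = (Cg * Cσ * A) * (spectralNormN N D + ε) ^ n := by ring
    exact limsup_le_of_pow_bound hw0 (mul_pos (mul_pos hCg hCσ) hA) (by linarith) hbnd
  -- hard direction
  have hmain : spectralNormN N D ≤ max (spectralNormN N₁ D₁) (spectralNormN N₂ D₂) := by
    refine le_of_forall_pos_le_add fun ε hε => ?_
    obtain ⟨hr10, A₁, hA₁, hA₁b⟩ := exists_bound_of_limsup hu0 hC11 huC hε
    obtain ⟨hr20, A₂, hA₂, hA₂b⟩ := exists_bound_of_limsup hw0 hC21 hwC hε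
    have hr10' : 0 ≤ spectralNormN N₁ D₁ := hr10
    have hr20' : 0 ≤ spectralNormN N₂ D₂ := hr20
    have hA₁b' : ∀ n : ℕ, opNormN N₁ (D₁^[n]) ≤ A₁ * (spectralNormN N₁ D₁ + ε) ^ n := hA₁b
    have hA₂b' : ∀ n : ℕ, opNormN N₂ (D₂^[n]) ≤ A₂ * (spectralNormN N₂ D₂ + ε) ^ n := hA₂b
    set M := max (spectralNormN N₁ D₁) (spectralNormN N₂ D₂) with hMdef
    have hM0 : 0 ≤ M := le_trans hr10' (le_max_left _ _)
    have hMε : (0:ℝ) < M + ε := by linarith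
    have hA₁M : ∀ n : ℕ, opNormN N₁ (D₁^[n]) ≤ A₁ * (M + ε) ^ n := by
      intro n
      refine le_trans (hA₁b' n) (mul_le_mul_of_nonneg_left ?_ hA₁.le)
      exact pow_le_pow_left₀ (by linarith) (add_le_add_left (le_max_left _ _) ε) n
    have hA₂M : ∀ n : ℕ, opNormN N₂ (D₂^[n]) ≤ A₂ * (M + ε) ^ n := by
      intro n
      refine le_trans (hA₂b' n) (mul_le_mul_of_nonneg_left ?_ hA₂.le)
      exact pow_le_pow_left₀ (by linarith) (add_le_add_left (le_max_right _ _) ε) n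
    set B₁ := Cf * A₁ * Cτ with hB₁def
    set B₂ := Cσ * A₂ * Cg with hB₂def
    set B₃ := Cf * A₁ * CE * A₂ * Cg * (M + ε)⁻¹ with hB₃def
    have hB₁pos : 0 < B₁ := mul_pos (mul_pos hCf hA₁) hCτ
    have hB₃0 : 0 ≤ B₃ := by
      have := inv_nonneg.mpr hMε.le
      have h1 := mul_pos (mul_pos (mul_pos (mul_pos hCf hA₁) hCE) hA₂) hCg
      rw [hB₃def]
      positivity
    set B := max B₁ (max B₂ B₃) with hBdef
    have hBpos : 0 < B := lt_of_lt_of_le hB₁pos (le_max_left _ _)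
    have hptw : ∀ (n : ℕ) (v : V), N (D^[n] v) ≤ (B * (M + ε) ^ n) * N v := by
      intro n v
      have hv0 : 0 ≤ N v := hN.nonneg v
      have hdecomp : D^[n] v = f (D₁^[n] (τ v)) + (σ (D₂^[n] (g v))
          + ∑ k ∈ Finset.range n, f (D₁^[n - 1 - k] (E' (D₂^[k] (g v))))) := by
        conv_lhs => rw [show v = f (τ v) + σ (g v) by rw [hτ]; abel]
        rw [iterate_add_of_add hDadd, ← hfDn, hkey]
      rw [hdecomp]
      have ht1 : N (f (D₁^[n] (τ v))) ≤ B₁ * (M + ε) ^ n * N v := by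
        calc N (f (D₁^[n] (τ v))) ≤ Cf * N₁ (D₁^[n] (τ v)) := hCfb _
          _ ≤ Cf * (opNormN N₁ (D₁^[n]) * N₁ (τ v)) :=
              mul_le_mul_of_nonneg_left (hule n _) hCf.le
          _ ≤ Cf * (A₁ * (M + ε) ^ n * (Cτ * N v)) := by
              refine mul_le_mul_of_nonneg_left (mul_le_mul (hA₁M n) (hCτb v) (hN₁.nonneg _)
                (mul_nonneg hA₁.le (pow_nonneg hMε.le n))) hCf.le
          _ = B₁ * (M + ε) ^ n * N v := by rw [hB₁def]; ring
      have ht2a : N (σ (D₂^[n] (g v))) ≤ B₂ * (M + ε) ^ n * N v := by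
        calc N (σ (D₂^[n] (g v))) ≤ Cσ * N₂ (D₂^[n] (g v)) := hCσb _
          _ ≤ Cσ * (opNormN N₂ (D₂^[n]) * N₂ (g v)) :=
              mul_le_mul_of_nonneg_left (hwle n _) hCσ.le
          _ ≤ Cσ * (A₂ * (M + ε) ^ n * (Cg * N v)) := by
              refine mul_le_mul_of_nonneg_left (mul_le_mul (hA₂M n) (hCgb v) (hN₂.nonneg _)
                (mul_nonneg hA₂.le (pow_nonneg hMε.le n))) hCσ.le
          _ = B₂ * (M + ε) ^ n * N v := by rw [hB₂def]; ring
      have ht2b : N (∑ k ∈ Finset.range n, f (D₁^[n - 1 - k] (E' (D₂^[k] (g v)))))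
          ≤ B₃ * (M + ε) ^ n * N v := by
        apply hN.sum_le _ _ (mul_nonneg (mul_nonneg hB₃0 (pow_nonneg hMε.le n)) hv0)
        intro k hk
        have hkn : k < n := Finset.mem_range.mp hk
        have hn1 : 1 ≤ n := by omega
        calc N (f (D₁^[n - 1 - k] (E' (D₂^[k] (g v)))))
            ≤ Cf * N₁ (D₁^[n - 1 - k] (E' (D₂^[k] (g v)))) := hCfb _
          _ ≤ Cf * (A₁ * (M + ε) ^ (n - 1 - k) * N₁ (E' (D₂^[k] (g v)))) := by
              refine mul_le_mul_of_nonneg_left ?_ hCf.le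
              exact le_trans (hule _ _)
                (mul_le_mul_of_nonneg_right (hA₁M _) (hN₁.nonneg _))
          _ ≤ Cf * (A₁ * (M + ε) ^ (n - 1 - k) * (CE * N₂ (D₂^[k] (g v)))) := by
              refine mul_le_mul_of_nonneg_left (mul_le_mul_of_nonneg_left (hCEb _)
                (mul_nonneg hA₁.le (pow_nonneg hMε.le _))) hCf.le
          _ ≤ Cf * (A₁ * (M + ε) ^ (n - 1 - k) * (CE * (A₂ * (M + ε) ^ k * (Cg * N v)))) := by
              refine mul_le_mul_of_nonneg_left (mul_le_mul_of_nonneg_left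
                (mul_le_mul_of_nonneg_left ?_ hCE.le)
                (mul_nonneg hA₁.le (pow_nonneg hMε.le _))) hCf.le
              exact le_trans (hwle _ _) (mul_le_mul (hA₂M _) (hCgb _) (hN₂.nonneg _)
                (mul_nonneg hA₂.le (pow_nonneg hMε.le _)))
          _ = (Cf * A₁ * CE * A₂ * Cg) * ((M + ε) ^ (n - 1 - k) * (M + ε) ^ k) * N v := by
              ring
          _ = (Cf * A₁ * CE * A₂ * Cg) * (M + ε) ^ (n - 1) * N v := by
              rw [← pow_add]
              congr 3
              omega
          _ = B₃ * (M + ε) ^ n * N v := by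
              have h1 : (M + ε) ^ n = (M + ε) ^ (n - 1) * (M + ε) := by
                rw [← pow_succ]
                congr 1
                omega
              have h2 : (M + ε) ^ (n - 1) = (M + ε)⁻¹ * (M + ε) ^ n := by
                rw [h1, mul_comm ((M + ε) ^ (n - 1)) (M + ε), ← mul_assoc,
                  inv_mul_cancel₀ hMε.ne', one_mul]
              rw [h2, hB₃def]
              ring
      calc N (f (D₁^[n] (τ v)) + (σ (D₂^[n] (g v))
            + ∑ k ∈ Finset.range n, f (D₁^[n - 1 - k] (E' (D₂^[k] (g v))))))
          ≤ max (N (f (D₁^[n] (τ v)))) (max (N (σ (D₂^[n] (g v))))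
              (N (∑ k ∈ Finset.range n, f (D₁^[n - 1 - k] (E' (D₂^[k] (g v))))))) :=
            le_trans (hN.add_le _ _) (max_le_max le_rfl (hN.add_le _ _))
        _ ≤ (B * (M + ε) ^ n) * N v := by
            have hp : 0 ≤ (M + ε) ^ n := pow_nonneg hMε.le n
            refine max_le ?_ (max_le ?_ ?_)
            · exact le_trans ht1 (mul_le_mul_of_nonneg_right
                (mul_le_mul_of_nonneg_right (le_max_left _ _) hp) hv0)
            · exact le_trans ht2a (mul_le_mul_of_nonneg_right (mul_le_mul_of_nonneg_right
                (le_trans (le_max_left _ _) (le_max_right _ _)) hp) hv0)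
            · exact le_trans ht2b (mul_le_mul_of_nonneg_right (mul_le_mul_of_nonneg_right
                (le_trans (le_max_right _ _) (le_max_right _ _)) hp) hv0)
    have hsB : ∀ n : ℕ, opNormN N (D^[n]) ≤ B * (M + ε) ^ n := by
      intro n
      exact opNormN_le hN (mul_nonneg hBpos.le (pow_nonneg hMε.le n)) hexV (hptw n)
    exact limsup_le_of_pow_bound hs0 hBpos hMε.le hsB
  exact le_antisymm hmain (max_le hle1 hle2)
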